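/- (Theorem 2, static regret) Let D > 0, G > 0, R ≥ 1 a natural number, and let L_1, …, L_R : ℝ → ℝ be convex differentiable functions with |L_j'(x)| ≤ G for all x ∈ [−D, D]. Let η = D/(G·√R) and define iterates x_1 ∈ [−D, D] and x_{j+1} = clamp(x_j − η·L_j'(x_j), −D, D) for j = 1, …, R−1, where clamp(y, −D, D) projects y onto the interval [−D, D]. Then Σ_{j=1}^R L_j(x_j) − min_{u∈[−D,D]} Σ_{j=1}^R L_j(u) ≤ (5/2)·G·D·√R; in particular, the static regret of online gradient descent grows as O(√R). -/

import Mathlib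

/-- First-order condition for convex differentiable functions on ℝ. -/
lemma convex_first_order {f f' : ℝ → ℝ} (hconv : ConvexOn ℝ Set.univ f)
    (hderiv : ∀ x, HasDerivAt f (f' x) x) (a u : ℝ) :
    f a - f u ≤ f' a * (a - u) := by
  rcases lt_trichotomy a u with h | h | h
  · have := hconv.le_slope_of_hasDerivAt (Set.mem_univ a) (Set.mem_univ u) h (hderiv a)
    rw [slope_def_field] at this
    have hnz : u - a > 0 := by linarith
    nlinarith [(le_div_iff₀ hnz).1 this]
  · simp [h]
  · have := hconv.slope_le_of_hasDerivAt (Set.mem_univ u) (Set.mem_univ a) h (hderiv a)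
    rw [slope_def_field] at this
    have hnz : a - u > 0 := by linarith
    rw [div_le_iff₀ hnz] at this
    nlinarith [this]

/-- Clamping to `[-D,D]` does not increase distance to points of `[-D,D]`. -/
lemma clamp_sq_le {D u t : ℝ} (hu : u ∈ Set.Icc (-D) D) :
    (max (-D) (min D t) - u) ^ 2 ≤ (t - u) ^ 2 := by
  obtain ⟨hu1, hu2⟩ := hu
  rcases le_total t (-D) with h | h
  · rw [min_eq_right (le_trans h (by linarith)), max_eq_left h]
    nlinarith
  · rcases le_total t D with h2 | h2
    · rw [min_eq_right h2, max_eq_right h]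
    · rw [min_eq_left h2, max_eq_right (by linarith)]
      nlinarith

/-- (Theorem 2, static regret) Online projected gradient descent over `[−D, D]` with
step size `η = D/(G·√R)` on convex differentiable losses with gradients bounded by `G`
achieves static regret at most `(5/2)·G·D·√R`, i.e. `O(√R)`. -/
theorem ogd_static_regret (D G : ℝ) (hD : 0 < D) (hG : 0 < G) (R : ℕ) (hR : 1 ≤ R)
    (L L' : ℕ → ℝ → ℝ)
    (hconv : ∀ j, ConvexOn ℝ Set.univ (L j))
    (hderiv : ∀ j x, HasDerivAt (L j) (L' j x) x)
    (hGbound : ∀ j, ∀ x ∈ Set.Icc (-D) D, |L' j x| ≤ G)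
    (x : ℕ → ℝ) (hx0 : x 0 ∈ Set.Icc (-D) D)
    (hstep : ∀ j, x (j + 1) =
      max (-D) (min D (x j - (D / (G * Real.sqrt R)) * L' j (x j)))) :
    (∑ j ∈ Finset.range R, L j (x j))
        - sInf ((fun u => ∑ j ∈ Finset.range R, L j u) '' Set.Icc (-D) D)
      ≤ (5 / 2) * G * D * Real.sqrt R := by
  have hRpos : (0:ℝ) < (R:ℝ) := by exact_mod_cast Nat.lt_of_lt_of_le Nat.zero_lt_one hR
  have hsR : 0 < Real.sqrt R := Real.sqrt_pos.2 hRpos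
  set η : ℝ := D / (G * Real.sqrt R) with hη
  have hηpos : 0 < η := by positivity
  have hsq : Real.sqrt R * Real.sqrt R = (R:ℝ) := Real.mul_self_sqrt (le_of_lt hRpos)
  -- iterates stay in the interval
  have hxin : ∀ j, x j ∈ Set.Icc (-D) D := by
    intro j
    induction j with
    | zero => exact hx0
    | succ n _ =>
      rw [hstep n]
      exact ⟨le_max_left _ _, max_le (by linarith) (min_le_left _ _)⟩
  have hg : ∀ j, |L' j (x j)| ≤ G := fun j => hGbound j _ (hxin j)
  -- per-step descent inequality
  have hstep2 : ∀ (u : ℝ), u ∈ Set.Icc (-D) D → ∀ j,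
      (x (j+1) - u) ^ 2 ≤ (x j - u) ^ 2 - 2 * η * (L' j (x j)) * (x j - u) + η^2 * G^2 := by
    intro u hu j
    have h1 : (x (j+1) - u) ^ 2 ≤ (x j - η * L' j (x j) - u) ^ 2 := by
      rw [hstep j]; exact clamp_sq_le hu
    have h2 : (L' j (x j))^2 ≤ G^2 := sq_le_sq' (by linarith [abs_le.1 (hg j)]) (abs_le.1 (hg j)).2
    nlinarith [sq_nonneg η]
  -- telescoping sum
  have hsum : ∀ (u : ℝ), u ∈ Set.Icc (-D) D → ∀ n,
      ∑ j ∈ Finset.range n, 2 * η * (L' j (x j)) * (x j - u)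
        ≤ (x 0 - u) ^ 2 - (x n - u) ^ 2 + n * (η^2 * G^2) := by
    intro u hu n
    induction n with
    | zero => simp
    | succ n ih =>
      rw [Finset.sum_range_succ]
      have := hstep2 u hu n
      push_cast
      nlinarith [this, ih]
  -- regret against any fixed u
  have hreg : ∀ u ∈ Set.Icc (-D) D,
      (∑ j ∈ Finset.range R, L j (x j)) - (∑ j ∈ Finset.range R, L j u)
        ≤ (5 / 2) * G * D * Real.sqrt R := by
    intro u hu
    have hA : ∑ j ∈ Finset.range R, 2 * η * (L' j (x j)) * (x j - u) ≤ 5 * D^2 := by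
      have h1 := hsum u hu R
      have h2 : (x 0 - u)^2 ≤ 4 * D^2 := by
        obtain ⟨a1, a2⟩ := hxin 0; obtain ⟨b1, b2⟩ := hu; nlinarith
      have h3 : (R:ℝ) * (η^2 * G^2) = D^2 := by
        have hsq2 : Real.sqrt R ^ 2 = (R:ℝ) := Real.sq_sqrt hRpos.le
        rw [hη, div_pow, mul_pow, hsq2]; field_simp
      nlinarith [sq_nonneg (x R - u), h1]
    have hB : ∑ j ∈ Finset.range R, (L j (x j) - L j u)
        ≤ ∑ j ∈ Finset.range R, (L' j (x j)) * (x j - u) :=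
      Finset.sum_le_sum fun j _ => convex_first_order (hconv j) (hderiv j) (x j) u
    have hC : (2 * η) * ∑ j ∈ Finset.range R, (L' j (x j)) * (x j - u) ≤ 5 * D^2 := by
      rw [Finset.mul_sum]
      convert hA using 2 with j; ring
    have hD2 : (2 * η) * ((5 / 2) * G * D * Real.sqrt R) = 5 * D^2 := by
      rw [hη]; field_simp
    have hE : ∑ j ∈ Finset.range R, (L' j (x j)) * (x j - u)
        ≤ (5 / 2) * G * D * Real.sqrt R := by
      have h2η : 0 < 2 * η := by linarith
      rw [← mul_le_mul_iff_of_pos_left h2η, hD2]; exact hC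
    calc (∑ j ∈ Finset.range R, L j (x j)) - (∑ j ∈ Finset.range R, L j u)
        = ∑ j ∈ Finset.range R, (L j (x j) - L j u) := by rw [Finset.sum_sub_distrib]
      _ ≤ _ := le_trans hB hE
  -- conclude via sInf
  have hne : ((fun u => ∑ j ∈ Finset.range R, L j u) '' Set.Icc (-D) D).Nonempty :=
    ⟨_, ⟨D, ⟨by linarith, le_refl D⟩, rfl⟩⟩
  have hlow : (∑ j ∈ Finset.range R, L j (x j)) - (5 / 2) * G * D * Real.sqrt R
      ≤ sInf ((fun u => ∑ j ∈ Finset.range R, L j u) '' Set.Icc (-D) D) := by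
    apply le_csInf hne
    rintro b ⟨u, hu, rfl⟩
    have := hreg u hu
    linarith
  linarith
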